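/- Let A ≠ B and suppose W(ξ) = A·H(-ξ) + B·H(ξ) (H the Heaviside function) with K(x) = (1/2)e^{-|x|}. Then W cannot satisfy the distributional equation ∂_ξ((W-c)²/2) + K'∗W = 0 on ℝ for any c ∈ ℝ with W(0+)+W(0-) = 2c: indeed K'∗W(ξ) = (B-A)K(ξ) ≠ 0 for all ξ while (W-c)²/2 is constant away from 0, yielding a contradiction. -/

import Mathlib

open MeasureTheory Real Set

noncomputable def KKaux (x : ℝ) : ℝ := (1 / 2) * Real.exp (-|x|)
noncomputable def Gaux (x : ℝ) : ℝ := -(1 / 2) * Real.sign x * Real.exp (-|x|)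

lemma Gaux_eq (x : ℝ) :
    Gaux x = if x < 0 then (1 / 2) * Real.exp x
      else if 0 < x then -(1 / 2) * Real.exp (-x) else 0 := by
  rcases lt_trichotomy x 0 with h | h | h
  · simp only [Gaux, Real.sign_of_neg h, abs_of_neg h, if_pos h, neg_neg]; ring
  · simp [Gaux, h, Real.sign_zero]
  · simp only [Gaux, Real.sign_of_pos h, abs_of_pos h, if_neg (not_lt.mpr h.le), if_pos h]
    ring

lemma measurable_Gaux : Measurable Gaux := by
  have : Gaux = fun x => if x < 0 then (1 / 2) * Real.exp x
      else if 0 < x then -(1 / 2) * Real.exp (-x) else 0 := funext Gaux_eq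
  rw [this]
  refine Measurable.ite (measurableSet_lt measurable_id measurable_const)
    ((Real.measurable_exp.comp measurable_id).const_mul _) ?_
  exact Measurable.ite (measurableSet_lt measurable_const measurable_id)
    ((Real.measurable_exp.comp measurable_id.neg).const_mul _) measurable_const

lemma integrable_expabs : Integrable (fun x : ℝ => Real.exp (-|x|)) := by
  have h1 : IntegrableOn (fun x : ℝ => Real.exp (-|x|)) (Iic 0) := by
    refine (integrableOn_exp_Iic 0).congr_fun (fun x hx => ?_) measurableSet_Iic
    rw [abs_of_nonpos (mem_Iic.mp hx), neg_neg]
  have h2 : IntegrableOn (fun x : ℝ => Real.exp (-|x|)) (Ioi 0) := by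
    refine (exp_neg_integrableOn_Ioi 0 one_pos).congr_fun (fun x hx => ?_) measurableSet_Ioi
    simp only [abs_of_pos (mem_Ioi.mp hx), neg_one_mul]
  have := h1.union h2
  rwa [Iic_union_Ioi, integrableOn_univ] at this

lemma integrable_Gaux : Integrable Gaux := by
  refine integrable_expabs.mono' measurable_Gaux.aestronglyMeasurable ?_
  filter_upwards with x
  rw [Gaux_eq x, Real.norm_eq_abs]
  rcases lt_trichotomy x 0 with h | h | h
  · rw [if_pos h, abs_of_neg h, neg_neg, abs_of_pos (by positivity)]
    nlinarith [Real.exp_pos x]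
  · simp [h, Real.exp_nonneg]
  · rw [if_neg (not_lt.mpr h.le), if_pos h, abs_of_pos h,
      show -(1 / 2) * Real.exp (-x) = -((1 / 2) * Real.exp (-x)) by ring,
      abs_neg, abs_of_pos (by positivity)]
    nlinarith [Real.exp_pos (-x)]

lemma Gaux_int_Ioi (ξ : ℝ) : ∫ x in Ioi ξ, Gaux x = -KKaux ξ := by
  rcases le_or_gt 0 ξ with h | h
  · have hcongr : ∀ x ∈ Ioi ξ, Gaux x = -(1 / 2) * Real.exp (-x) := by
      intro x hx
      have hx0 : 0 < x := lt_of_le_of_lt h hx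
      rw [Gaux_eq, if_neg (not_lt.mpr hx0.le), if_pos hx0]
    rw [setIntegral_congr_fun measurableSet_Ioi hcongr, integral_const_mul,
      integral_exp_neg_Ioi, KKaux, abs_of_nonneg h]
    ring
  · have hsplit : Ioi ξ = Ioc ξ 0 ∪ Ioi 0 := (Ioc_union_Ioi_eq_Ioi h.le).symm
    rw [hsplit, setIntegral_union (Ioc_disjoint_Ioi le_rfl) measurableSet_Ioi
      integrable_Gaux.integrableOn integrable_Gaux.integrableOn]
    have h1 : ∫ x in Ioc ξ 0, Gaux x = (1 / 2) * (1 - Real.exp ξ) := by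
      rw [integral_Ioc_eq_integral_Ioo,
        setIntegral_congr_fun measurableSet_Ioo
          (fun x hx => by rw [Gaux_eq, if_pos hx.2] : ∀ x ∈ Ioo ξ 0, Gaux x = (1 / 2) * Real.exp x),
        integral_const_mul, ← integral_Ioc_eq_integral_Ioo,
        ← intervalIntegral.integral_of_le h.le, integral_exp, Real.exp_zero]
    have h2 : ∫ x in Ioi (0 : ℝ), Gaux x = -(1 / 2) := by
      have hcongr : ∀ x ∈ Ioi (0 : ℝ), Gaux x = -(1 / 2) * Real.exp (-x) := by
        intro x hx
        rw [Gaux_eq, if_neg (not_lt.mpr (mem_Ioi.mp hx).le), if_pos (mem_Ioi.mp hx)]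
      rw [setIntegral_congr_fun measurableSet_Ioi hcongr, integral_const_mul,
        integral_exp_neg_Ioi, neg_zero, Real.exp_zero, mul_one]
    rw [h1, h2, KKaux, abs_of_neg h, neg_neg]
    ring

lemma Gaux_total : ∫ x, Gaux x = 0 := by
  have hodd : ∀ x, Gaux (-x) = -Gaux x := by
    intro x
    simp only [Gaux, Real.sign_neg, abs_neg]
    ring
  have h1 : ∫ x, Gaux x = ∫ x, Gaux (-x) := (integral_neg_eq_self Gaux _).symm
  simp only [hodd, integral_neg] at h1
  linarith

lemma Gaux_int_Iic (ξ : ℝ) : ∫ x in Iic ξ, Gaux x = KKaux ξ := by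
  have h := intervalIntegral.integral_Iic_add_Ioi (b := ξ) (μ := volume)
    integrable_Gaux.integrableOn integrable_Gaux.integrableOn
  rw [Gaux_total, Gaux_int_Ioi] at h
  linarith

lemma conv_eval (A B ξ : ℝ) :
    (∫ y : ℝ, Gaux (ξ - y) * (if y < 0 then A else B)) = (B - A) * KKaux ξ := by
  have step1 : (∫ y : ℝ, Gaux (ξ - y) * (if y < 0 then A else B))
      = ∫ x : ℝ, Gaux (ξ - (ξ - x)) * (if ξ - x < 0 then A else B) :=
    (integral_sub_left_eq_self (fun y => Gaux (ξ - y) * (if y < 0 then A else B)) volume ξ).symm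
  rw [step1]
  have step2 : ∀ x : ℝ, Gaux (ξ - (ξ - x)) * (if ξ - x < 0 then A else B)
      = (Ioi ξ).indicator (fun x => A * Gaux x) x + (Iic ξ).indicator (fun x => B * Gaux x) x := by
    intro x
    have hx : ξ - (ξ - x) = x := by ring
    rw [hx]
    by_cases hξx : ξ < x
    · rw [if_pos (by linarith)]
      simp [Set.indicator_of_mem (mem_Ioi.mpr hξx), Set.indicator_of_notMem
        (by simpa using hξx : x ∉ Iic ξ), mul_comm]
    · rw [if_neg (by push_neg at hξx ⊢; linarith)]
      simp [Set.indicator_of_notMem (by simpa using hξx : x ∉ Ioi ξ),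
        Set.indicator_of_mem (mem_Iic.mpr (not_lt.mp hξx)), mul_comm]
  simp_rw [step2]
  rw [integral_add
      (((integrable_Gaux.const_mul A)).indicator measurableSet_Ioi)
      (((integrable_Gaux.const_mul B)).indicator measurableSet_Iic),
    integral_indicator measurableSet_Ioi, integral_indicator measurableSet_Iic,
    integral_const_mul, integral_const_mul, Gaux_int_Ioi, Gaux_int_Iic]
  ring

/-- A piecewise constant profile `W = A·H(-ξ) + B·H(ξ)` with `A ≠ B` cannot yield
a weak traveling wave: one has `(K'∗W)(ξ) = (B-A)·K(ξ) ≠ 0` for all `ξ`, so the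
equation `(W(ξ)-c)·W'(ξ) + (K'∗W)(ξ) = 0` for all `ξ ≠ 0` fails for every `c`. -/
theorem no_piecewise_constant_wave (A B : ℝ) (hAB : A ≠ B)
    (W K K' : ℝ → ℝ)
    (hW : ∀ ξ, W ξ = if ξ < 0 then A else B)
    (hK : ∀ x, K x = (1 / 2) * Real.exp (-|x|))
    (hK' : ∀ x, K' x = -(1 / 2) * Real.sign x * Real.exp (-|x|)) :
    (∀ ξ : ℝ, (∫ y : ℝ, K' (ξ - y) * W y) = (B - A) * K ξ) ∧
      (∀ ξ : ℝ, (B - A) * K ξ ≠ 0) ∧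
      ∀ c : ℝ, ¬ (∀ ξ : ℝ, ξ ≠ 0 →
        (W ξ - c) * deriv W ξ + (∫ y : ℝ, K' (ξ - y) * W y) = 0) := by
  have hG : K' = Gaux := funext fun x => (hK' x).trans rfl
  have hKK : K = KKaux := funext fun x => (hK x).trans rfl
  have hWf : W = fun y => if y < 0 then A else B := funext hW
  have part1 : ∀ ξ : ℝ, (∫ y : ℝ, K' (ξ - y) * W y) = (B - A) * K ξ := by
    intro ξ
    rw [hG, hKK, hWf]
    exact conv_eval A B ξ
  have part2 : ∀ ξ : ℝ, (B - A) * K ξ ≠ 0 := by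
    intro ξ
    have hBA : B - A ≠ 0 := sub_ne_zero.mpr (Ne.symm hAB)
    have hKpos : 0 < K ξ := by rw [hK]; positivity
    exact mul_ne_zero hBA hKpos.ne'
  refine ⟨part1, part2, ?_⟩
  intro c hc
  have h1 := hc 1 one_ne_zero
  have hev : W =ᶠ[nhds (1 : ℝ)] fun _ => B := by
    filter_upwards [Ioi_mem_nhds (by norm_num : (0 : ℝ) < 1)] with x hx
    rw [hW, if_neg (not_lt.mpr (mem_Ioi.mp hx).le)]
  have hderiv : deriv W 1 = 0 := by
    rw [hev.deriv_eq, deriv_const]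
  rw [hderiv, mul_zero, zero_add, part1 1] at h1
  exact part2 1 h1
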